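/- Let M_n be the number of atoms of size n in the main cohort (the cohort of the nest N_n of n nested arches, for the appropriate size). Then the generating function M(t) = Σ M_n t^n satisfies M = t + tM + tM², so M_{n+1} is the n-th Motzkin number; consequently the number of arch systems in the main cohort of size n is the n-th Motzkin number. -/

import Mathlib

/-- Plane forests, modelling non-crossing arch systems: `node c r` is an atom
(an arch over the contents `c`) followed by the rest of the forest `r`. -/
inductive PF : Type
  | nil : PF
  | node : PF → PF → PF
  deriving DecidableEq

namespace PF

/-- number of arches (nodes) -/
def size : PF → ℕ
  | nil => 0
  | node c r => 1 + c.size + r.size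

/-- concatenation of arch systems -/
def append : PF → PF → PF
  | nil, q => q
  | node c r, q => node c (r.append q)

instance : Append PF := ⟨PF.append⟩

/-- an atom: a nonempty arch system with a single outermost arch -/
def IsAtom (a : PF) : Prop := ∃ c, a = node c nil

/-- an atom or the empty arch system -/
def AtomOrNil (a : PF) : Prop := a = nil ∨ IsAtom a

/-- One-step arch deletion: `Del X Y` means `Y` is obtained from `X` by deleting one arch
(the contents of a deleted arch are spliced in its place). -/
inductive Del : PF → PF → Prop
  | root (c r : PF) : Del (node c r) (c ++ r)
  | inside {c c' : PF} (r : PF) : Del c c' → Del (node c r) (node c' r)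
  | rest {r r' : PF} (c : PF) : Del r r' → Del (node c r) (node c r')

/-- `Contains X A` : `A` is a substructure (subsystem) of `X`. -/
def Contains (X A : PF) : Prop := Relation.ReflTransGen Del X A

/-- the class of arch systems avoiding `A` -/
def Av (A : PF) : Set PF := {X | ¬ Contains X A}

/-- Wilf-equivalence: same counting sequence by number of arches. -/
def WilfEq (A B : PF) : Prop :=
  ∀ n, Set.ncard {X | X ∈ Av A ∧ X.size = n} = Set.ncard {X | X ∈ Av B ∧ X.size = n}

/-- the generating function of `Av A`, counting by number of arches -/
noncomputable def F (A : PF) : PowerSeries ℚ :=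
  PowerSeries.mk fun n => (Set.ncard {X | X ∈ Av A ∧ X.size = n} : ℚ)

end PF

/-- concatenation of a list of arch systems -/
def concatList (L : List PF) : PF := L.foldr (· ++ ·) PF.nil

/-- The equivalence relation `∼` whose classes are cohorts: the finest equivalence
relation satisfying the four closure rules. -/
inductive Sim : PF → PF → Prop
  | refl (A : PF) : Sim A A
  | symm {A B : PF} : Sim A B → Sim B A
  | trans {A B C : PF} : Sim A B → Sim B C → Sim A C
  | arch {A B : PF} : Sim A B → Sim (PF.node A PF.nil) (PF.node B PF.nil)
  | subst {a b : PF} (P Q : PF) : PF.AtomOrNil a → PF.AtomOrNil b → Sim a b →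
      Sim (P ++ a ++ Q) (P ++ b ++ Q)
  | comm {a b : PF} (P Q : PF) : PF.AtomOrNil a → PF.AtomOrNil b →
      Sim (P ++ a ++ b ++ Q) (P ++ b ++ a ++ Q)
  | rot {a b c : PF} : PF.AtomOrNil a → PF.AtomOrNil b → PF.AtomOrNil c →
      Sim (a ++ PF.node (b ++ c) PF.nil) (PF.node (a ++ b) PF.nil ++ c)

/-- the nest of `n` nested arches -/
def nest : ℕ → PF
  | 0 => PF.nil
  | n + 1 => PF.node (nest n) PF.nil

/-- the `n`-th Motzkin number -/
def motzkin (n : ℕ) : ℕ := ∑ k ∈ Finset.range (n + 1), n.choose (2 * k) * catalan k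

/-- the truncated continued fractions `C_n` of the Catalan generating function -/
noncomputable def Cfun : ℕ → PowerSeries ℚ
  | 0 => 1
  | n + 1 => (1 - PowerSeries.X * Cfun n)⁻¹

/-- a balanced parenthesis word (Dyck word): `true` = opening, `false` = closing -/
def BalancedW (w : List Bool) : Prop :=
  w.count true = w.count false ∧ ∀ p : List Bool, p <+: w → p.count false ≤ p.count true

/-- the height of a Dyck path -/
def wheight (w : List Bool) : ℕ :=
  (w.inits.map fun p => p.count true - p.count false).foldr max 0

/-- One-step deletion of a matched pair of parentheses (an arch) in a word. -/
inductive WDel : List Bool → List Bool → Prop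
  | mk (x y z : List Bool) : BalancedW y →
      WDel (x ++ [true] ++ y ++ [false] ++ z) (x ++ y ++ z)

/-- `l` avoids the pattern 231 -/
def Avoids231 (l : List ℕ) : Prop := ¬ ∃ a b c : ℕ, [b, c, a].Sublist l ∧ a < b ∧ b < c

/-- `p` and `s` are order-isomorphic sequences -/
def OrdIso (p s : List ℕ) : Prop :=
  p.length = s.length ∧ ∀ i j : ℕ, i < p.length → j < p.length →
    (p.getD i 0 < p.getD j 0 ↔ s.getD i 0 < s.getD j 0)

/-- The generating function counting atoms of each size in the main cohort. -/
noncomputable def Mgf : PowerSeries ℚ :=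
  PowerSeries.mk fun n =>
    (Set.ncard {X : PF | X.IsAtom ∧ X.size = n ∧ Sim X (nest n)} : ℚ)

-- ====== auxiliary development ======


open Finset

lemma hockey (p : ℕ) : ∀ m : ℕ, ∑ a ∈ range (m+1), a.choose p = (m+1).choose (p+1) := by
  intro m
  induction m with
  | zero =>
      cases p with
      | zero => simp
      | succ p => simp [Nat.choose_eq_zero_of_lt]
  | succ m ih =>
      rw [sum_range_succ, ih, Nat.choose_succ_succ (m+1) p, Nat.add_comm]

lemma upper_vandermonde (p : ℕ) : ∀ m q : ℕ,
    ∑ a ∈ range (m+1), a.choose p * (m-a).choose q = (m+1).choose (p+q+1) := by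
  intro m
  induction m with
  | zero =>
      intro q
      simp only [range_one, sum_singleton, Nat.zero_sub, Nat.choose]
      cases p <;> cases q <;> simp [Nat.choose, Nat.choose_eq_zero_of_lt]
  | succ m ih =>
      intro q
      cases q with
      | zero =>
          simp only [Nat.choose_zero_right, Nat.mul_one, hockey, Nat.add_zero]
      | succ q =>
          rw [sum_range_succ]
          have h0 : (m + 1 - (m+1)).choose (q+1) = 0 := by simp
          rw [h0, Nat.mul_zero, Nat.add_zero]
          have : ∀ a ∈ range (m+1), a.choose p * (m+1-a).choose (q+1)
              = a.choose p * (m-a).choose q + a.choose p * (m-a).choose (q+1) := by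
            intro a ha
            rw [mem_range] at ha
            have : m + 1 - a = (m - a) + 1 := by omega
            rw [this, Nat.choose_succ_succ, Nat.mul_add]
          rw [sum_congr rfl this, sum_add_distrib, ih q, ih (q+1)]
          have h2 : p + (q+1) + 1 = (p + q + 1) + 1 := by ring
          rw [h2]
          exact (Nat.choose_succ_succ (m+1) (p+q+1)).symm

lemma motzkin_eq_sum (n N : ℕ) (h : n < N) :
    motzkin n = ∑ k ∈ range N, n.choose (2*k) * catalan k := by
  rw [motzkin]
  apply sum_subset
  · intro x hx; rw [mem_range] at *; omega
  · intro x _ hx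
    rw [mem_range] at hx
    have : n < 2 * x := by omega
    rw [Nat.choose_eq_zero_of_lt this, Nat.zero_mul]

lemma motzkin_zero : motzkin 0 = 1 := by simp [motzkin]

lemma catsum (m s : ℕ) (hs : s < m + 2) :
    ∑ p ∈ (range (m+2) ×ˢ range (m+2)).filter (fun p => p.1 + p.2 = s),
      catalan p.1 * catalan p.2 = catalan (s+1) := by
  have hset : (range (m+2) ×ˢ range (m+2)).filter (fun p => p.1 + p.2 = s)
      = Finset.HasAntidiagonal.antidiagonal s := by
    ext p
    simp only [mem_filter, mem_product, mem_range, Finset.HasAntidiagonal.mem_antidiagonal]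
    omega
  rw [hset, ← catalan_succ']

lemma bigB (m : ℕ) :
    ∑ k ∈ range (m+2), ∑ l ∈ range (m+2), (m+1).choose (2*k+2*l+1) * (catalan k * catalan l)
      = ∑ s ∈ range (m+2), (m+1).choose (2*s+1) * catalan (s+1) := by
  rw [← Finset.sum_product']
  have hmaps : ∀ p ∈ range (m+2) ×ˢ range (m+2), p.1 + p.2 ∈ range (2*(m+2)) := by
    intro p hp
    rw [mem_product, mem_range, mem_range] at hp
    rw [mem_range]; omega
  rw [← Finset.sum_fiberwise_of_maps_to hmaps]
  have hzero : ∀ s ∈ range (2*(m+2)), s ∉ range (m+2) →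
      (∑ p ∈ (range (m+2) ×ˢ range (m+2)).filter (fun p => p.1 + p.2 = s),
        (m+1).choose (2*p.1+2*p.2+1) * (catalan p.1 * catalan p.2)) = 0 := by
    intro s _ hs
    rw [mem_range] at hs
    apply sum_eq_zero
    intro p hp
    rw [mem_filter] at hp
    have : m + 1 < 2*p.1 + 2*p.2 + 1 := by omega
    rw [Nat.choose_eq_zero_of_lt this, Nat.zero_mul]
  rw [← sum_subset (by intro x; simp only [mem_range]; omega) hzero]
  apply sum_congr rfl
  intro s hs
  rw [mem_range] at hs
  have : ∀ p ∈ (range (m+2) ×ˢ range (m+2)).filter (fun p => p.1 + p.2 = s),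
      (m+1).choose (2*p.1+2*p.2+1) * (catalan p.1 * catalan p.2)
        = (m+1).choose (2*s+1) * (catalan p.1 * catalan p.2) := by
    intro p hp
    rw [mem_filter] at hp
    have h2 : 2*p.1+2*p.2+1 = 2*s+1 := by omega
    rw [h2]
  rw [sum_congr rfl this, ← mul_sum, catsum m s hs]

lemma motzkin_rec (n : ℕ) :
    motzkin (n+1) = motzkin n + ∑ i ∈ range n, motzkin i * motzkin (n-1-i) := by
  have key : ∑ k ∈ range (n+1), (n+1).choose (2*(k+1)) * catalan (k+1)
      = ∑ k ∈ range (n+1), n.choose (2*k+2) * catalan (k+1)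
        + ∑ k ∈ range (n+1), n.choose (2*k+1) * catalan (k+1) := by
    rw [← sum_add_distrib]
    apply sum_congr rfl
    intro k _
    have h2 : 2*(k+1) = (2*k+1) + 1 := by ring
    rw [h2, Nat.choose_succ_succ, Nat.add_mul, Nat.add_comm (n.choose (2*k+1) * _)]
  have e1 : motzkin n = ∑ k ∈ range (n+1), n.choose (2*k+2) * catalan (k+1) + 1 := by
    rw [motzkin_eq_sum n (n+2) (by omega), sum_range_succ' _ (n+1)]
    have h3 : ∀ k ∈ range (n+1),
        n.choose (2*(k+1)) * catalan (k+1) = n.choose (2*k+2) * catalan (k+1) := by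
      intro k _
      have h4 : 2*(k+1) = 2*k+2 := by ring
      rw [h4]
    rw [sum_congr rfl h3]
    simp
  have lhs : motzkin (n+1) = motzkin n + ∑ k ∈ range (n+1), n.choose (2*k+1) * catalan (k+1) := by
    rw [motzkin, sum_range_succ' _ (n+1), key, e1]
    simp only [Nat.mul_zero, Nat.choose_zero_right, catalan_zero, Nat.mul_one]
    omega
  rw [lhs]
  congr 1
  -- B = RHS sum
  cases n with
  | zero => simp
  | succ m =>
      have expand : ∀ i ∈ range (m+1),
          motzkin i * motzkin (m+1-1-i)
            = ∑ k ∈ range (m+2), ∑ l ∈ range (m+2),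
                (i.choose (2*k) * catalan k) * ((m-i).choose (2*l) * catalan l) := by
        intro i hi
        rw [mem_range] at hi
        have h1 : motzkin i = ∑ k ∈ range (m+2), i.choose (2*k) * catalan k :=
          motzkin_eq_sum i (m+2) (by omega)
        have hmi : m + 1 - 1 - i = m - i := by omega
        have h2 : motzkin (m+1-1-i) = ∑ l ∈ range (m+2), (m-i).choose (2*l) * catalan l := by
          rw [hmi]; exact motzkin_eq_sum (m-i) (m+2) (by omega)
        rw [h1, h2, Finset.sum_mul_sum]
      rw [sum_congr rfl expand, Finset.sum_comm]
      have swap2 : ∀ k ∈ range (m+2),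
          ∑ i ∈ range (m+1), ∑ l ∈ range (m+2),
              (i.choose (2*k) * catalan k) * ((m-i).choose (2*l) * catalan l)
          = ∑ l ∈ range (m+2), (m+1).choose (2*k+2*l+1) * (catalan k * catalan l) := by
        intro k _
        rw [Finset.sum_comm]
        apply sum_congr rfl
        intro l _
        have : ∀ i ∈ range (m+1),
            (i.choose (2*k) * catalan k) * ((m-i).choose (2*l) * catalan l)
              = (i.choose (2*k) * (m-i).choose (2*l)) * (catalan k * catalan l) := by
          intro i _; ring
        rw [sum_congr rfl this, ← sum_mul, upper_vandermonde]
      rw [sum_congr rfl swap2, bigB]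

namespace PF

@[simp] lemma append_eq (p q : PF) : PF.append p q = p ++ q := rfl

@[simp] lemma nil_append (q : PF) : (nil ++ q : PF) = q := rfl
@[simp] lemma node_append (c r q : PF) : ((node c r) ++ q : PF) = node c (r ++ q) := rfl
@[simp] lemma append_nil (p : PF) : (p ++ nil : PF) = p := by
  induction p with
  | nil => rfl
  | node c r ihc ihr => rw [node_append, ihr]

@[simp] lemma size_append (p q : PF) : (p ++ q : PF).size = p.size + q.size := by
  induction p with
  | nil => simp [size]
  | node c r ihc ihr => simp [size, ihr]; omega

/-- number of trees (top-level arches) -/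
def ntrees : PF → ℕ
  | nil => 0
  | node _ r => 1 + ntrees r

@[simp] lemma ntrees_append (p q : PF) : (p ++ q : PF).ntrees = p.ntrees + q.ntrees := by
  induction p with
  | nil => simp [ntrees]
  | node c r ihc ihr => simp [ntrees, ihr]; omega

/-- unary-binary: every node has at most two children -/
def UB : PF → Prop
  | nil => True
  | node c r => ntrees c ≤ 2 ∧ UB c ∧ UB r

@[simp] lemma UB_nil : UB nil := trivial

@[simp] lemma UB_node (c r : PF) : UB (node c r) ↔ ntrees c ≤ 2 ∧ UB c ∧ UB r := Iff.rfl

@[simp] lemma UB_append (p q : PF) : UB (p ++ q : PF) ↔ UB p ∧ UB q := by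
  induction p with
  | nil => simp
  | node c r ihc ihr => simp [ihr]; tauto

def Good (X : PF) : Prop := UB X ∧ ntrees X ≤ 2

lemma AtomOrNil.ntrees_le {a : PF} (h : AtomOrNil a) : a.ntrees ≤ 1 := by
  rcases h with rfl | ⟨c, rfl⟩ <;> simp [ntrees]

lemma AtomOrNil.size_eq_zero_iff {a : PF} (h : AtomOrNil a) : a.size = 0 ↔ a = nil := by
  rcases h with rfl | ⟨c, rfl⟩ <;> simp [size]

lemma AtomOrNil.ntrees_eq {a : PF} (h : AtomOrNil a) :
    a.ntrees = if a = nil then 0 else 1 := by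
  rcases h with rfl | ⟨c, rfl⟩ <;> simp [ntrees]

end PF

open PF

lemma Sim.size_eq {X Y : PF} (h : Sim X Y) : X.size = Y.size := by
  induction h with
  | refl => rfl
  | symm _ ih => omega
  | trans _ _ ih1 ih2 => omega
  | arch _ ih => simp [size]; omega
  | subst P Q ha hb _ ih => simp; omega
  | comm P Q ha hb => simp; omega
  | rot ha hb hc => simp [size]; omega

lemma Sim.good_iff {X Y : PF} (h : Sim X Y) : Good X ↔ Good Y := by
  induction h with
  | refl => exact Iff.rfl
  | symm _ ih => exact ih.symm
  | trans _ _ ih1 ih2 => exact ih1.trans ih2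
  | arch _ ih =>
      unfold Good at *
      simp only [UB_node, ntrees] at *
      constructor
      · rintro ⟨⟨h1, h2, -⟩, -⟩
        have := ih.mp ⟨h2, h1⟩
        exact ⟨⟨this.2, this.1, trivial⟩, by simp [ntrees]⟩
      · rintro ⟨⟨h1, h2, -⟩, -⟩
        have := ih.mpr ⟨h2, h1⟩
        exact ⟨⟨this.2, this.1, trivial⟩, by simp [ntrees]⟩
  | @subst a b P Q ha hb hs ih =>
      have hsz : a.size = b.size := hs.size_eq
      have hnt : a.ntrees = b.ntrees := by
        rw [ha.ntrees_eq, hb.ntrees_eq]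
        by_cases h1 : a = nil
        · have : b = nil := by
            rw [← hb.size_eq_zero_iff, ← hsz, ha.size_eq_zero_iff]; exact h1
          simp [h1, this]
        · have : ¬ b = nil := by
            rw [← hb.size_eq_zero_iff, ← hsz, ha.size_eq_zero_iff] at *; exact h1
          simp [h1, this]
      have hub : UB a ↔ UB b := by
        have h2 : Good a ↔ UB a := by
          unfold Good; constructor
          · exact fun h => h.1
          · exact fun h => ⟨h, le_trans ha.ntrees_le (by norm_num)⟩
        have h3 : Good b ↔ UB b := by
          unfold Good; constructor
          · exact fun h => h.1
          · exact fun h => ⟨h, le_trans hb.ntrees_le (by norm_num)⟩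
        rw [← h2, ← h3]; exact ih
      unfold Good
      simp only [UB_append, ntrees_append]
      rw [hnt]
      tauto
  | @comm a b P Q ha hb =>
      unfold Good
      simp only [UB_append, ntrees_append]
      constructor
      · rintro ⟨h1, h2⟩; exact ⟨by tauto, by omega⟩
      · rintro ⟨h1, h2⟩; exact ⟨by tauto, by omega⟩
  | @rot a b c ha hb hc =>
      unfold Good
      simp only [append_eq, nil_append, append_nil, UB_append, UB_node, ntrees_append, ntrees]
      have h1 := ha.ntrees_le
      have h2 := hb.ntrees_le
      have h3 := hc.ntrees_le
      constructor
      · rintro ⟨⟨hA, -, ⟨hB, hC⟩, -⟩, -⟩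
        exact ⟨⟨⟨by omega, ⟨hA, hB⟩, trivial⟩, hC⟩, by omega⟩
      · rintro ⟨⟨⟨-, ⟨hA, hB⟩, -⟩, hC⟩, -⟩
        exact ⟨⟨hA, by omega, ⟨hB, hC⟩, trivial⟩, by omega⟩

lemma good_nest (n : ℕ) : Good (nest n) := by
  induction n with
  | zero => exact ⟨trivial, by simp [nest, ntrees]⟩
  | succ n ih =>
      refine ⟨⟨?_, ih.1, trivial⟩, by simp [nest, ntrees]⟩
      exact le_trans ih.2 (le_refl 2)

lemma size_nest (n : ℕ) : (nest n).size = n := by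
  induction n with
  | zero => rfl
  | succ n ih => simp [nest, size, ih]; omega

/-- the key rotation chain: two UB atoms merge into one atom -/
lemma merge_atoms : ∀ N : ℕ, ∀ cb ca : PF, (node cb nil).size ≤ N →
    UB (node ca nil) → UB (node cb nil) →
    ∃ Y : PF, UB Y ∧ Y.ntrees ≤ 2 ∧ Y.size + 1 = (node ca nil).size + (node cb nil).size ∧
      Sim ((node ca nil : PF) ++ node cb nil) (node Y nil) := by
  intro N
  induction N with
  | zero => intro cb ca h; simp [size] at h
  | succ N ih =>
      intro cb ca hsz hua hub
      have hAa : AtomOrNil (node ca nil : PF) := Or.inr ⟨ca, rfl⟩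
      rw [UB_node] at hub
      obtain ⟨hcb2, hcbU, -⟩ := hub
      match cb, hcb2 with
      | nil, _ =>
          refine ⟨node ca nil, hua, by simp [ntrees], by simp [size], ?_⟩
          have := Sim.rot (a := node ca nil) (b := nil) (c := nil) hAa (Or.inl rfl) (Or.inl rfl)
          simpa using this
      | node e nil, _ =>
          have hAe : AtomOrNil (node e nil : PF) := Or.inr ⟨e, rfl⟩
          have := Sim.rot (a := node ca nil) (b := node e nil) (c := nil) hAa hAe (Or.inl rfl)
          simp only [append_nil] at this
          refine ⟨(node ca nil : PF) ++ node e nil, ?_, by simp [ntrees], by simp [size]; omega, this⟩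
          rw [UB_append]
          exact ⟨hua, by simp [UB_node] at hcbU ⊢; tauto⟩
      | node e (node f nil), _ =>
          have hAe : AtomOrNil (node e nil : PF) := Or.inr ⟨e, rfl⟩
          have hAf : AtomOrNil (node f nil : PF) := Or.inr ⟨f, rfl⟩
          have hsplit : (node e (node f nil) : PF) = (node e nil : PF) ++ node f nil := by simp
          have hrot := Sim.rot (a := node ca nil) (b := node e nil) (c := node f nil) hAa hAe hAf
          rw [← hsplit] at hrot
          -- new first atom
          set a' : PF := node ((node ca nil : PF) ++ node e nil) nil with ha'
          have hub' : UB a' := by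
            rw [ha', UB_node, UB_append]
            simp only [UB_node] at hcbU
            refine ⟨by simp [ntrees], ⟨hua, ?_⟩, trivial⟩
            · exact ⟨hcbU.1, hcbU.2.1, trivial⟩
          have hubf : UB (node f nil : PF) := by
            simp only [UB_node] at hcbU ⊢
            rcases hcbU with ⟨-, -, h1, h2, -⟩
            exact ⟨h1, h2, trivial⟩
          have hszf : (node f nil : PF).size ≤ N := by
            simp only [size] at hsz ⊢
            omega
          obtain ⟨Y, hY1, hY2, hY3, hY4⟩ := ih f ((node ca nil : PF) ++ node e nil) hszf hub' hubf
          refine ⟨Y, hY1, hY2, ?_, Sim.trans hrot hY4⟩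
          simp only [size, size_append] at hY3 ⊢
          omega
      | node e (node f (node g r)), h22 =>
          exfalso
          simp only [ntrees] at h22
          omega

lemma good_sim_nest : ∀ n : ℕ, ∀ X : PF, X.size = n → Good X → Sim X (nest n) := by
  intro n
  induction n using Nat.strong_induction_on with
  | _ n ih =>
    intro X hsz hg
    match X with
    | nil =>
        have : n = 0 := by simpa [size] using hsz.symm
        rw [this]; exact Sim.refl _
    | node c nil =>
        have hgc : Good c := by
          obtain ⟨h1, -⟩ := hg
          rw [UB_node] at h1
          exact ⟨h1.2.1, h1.1⟩
        have hszc : c.size + 1 = n := by simp [size] at hsz; omega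
        have hlt : c.size < n := by omega
        have := Sim.arch (ih c.size hlt c rfl hgc)
        rw [← hszc]
        exact this
    | node c (node d nil) =>
        obtain ⟨h1, -⟩ := hg
        rw [UB_node] at h1
        obtain ⟨hc2, hcU, hd⟩ := h1
        rw [UB_node] at hd
        have hua : UB (node c nil : PF) := by rw [UB_node]; exact ⟨hc2, hcU, trivial⟩
        have hub : UB (node d nil : PF) := by
          rw [UB_node]; exact ⟨hd.1, hd.2.1, trivial⟩
        obtain ⟨Y, hY1, hY2, hY3, hY4⟩ :=
          merge_atoms (node d nil : PF).size d c (le_refl _) hua hub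
        have hX : (node c (node d nil) : PF) = (node c nil : PF) ++ node d nil := by simp
        have hszY : Y.size + 1 = n := by
          rw [← hsz, hX, size_append] at *
          omega
        have hYg : Good Y := ⟨hY1, hY2⟩
        have hlt : Y.size < n := by omega
        have := Sim.arch (ih Y.size hlt Y rfl hYg)
        rw [hX]
        refine Sim.trans hY4 ?_
        rw [← hszY]
        exact this
    | node c (node d (node e r)) =>
        exfalso
        obtain ⟨-, h2⟩ := hg
        simp only [ntrees] at h2
        omega

lemma sim_nest_iff (n : ℕ) (X : PF) :
    (X.size = n ∧ Sim X (nest n)) ↔ (Good X ∧ X.size = n) := by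
  constructor
  · rintro ⟨h1, h2⟩; exact ⟨h2.good_iff.mpr (good_nest n), h1⟩
  · rintro ⟨h1, h2⟩; exact ⟨h2, good_sim_nest n X h2 h1⟩

open Finset in
def forestS : ℕ → Finset PF
  | 0 => {PF.nil}
  | n+1 =>
    ((forestS n).image fun c => PF.node c PF.nil) ∪
    ((Finset.range n).attach.biUnion fun i =>
      (forestS i.1).biUnion fun c =>
        (forestS (n-1-i.1)).image fun d => PF.node c (PF.node d PF.nil))
decreasing_by
  · omega
  · have := Finset.mem_range.mp i.2
    omega
  · omega

lemma mem_forestS : ∀ n : ℕ, ∀ X : PF, X ∈ forestS n ↔ (Good X ∧ X.size = n) := by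
  intro n
  induction n using Nat.strong_induction_on with
  | _ n ih =>
    intro X
    match n with
    | 0 =>
        simp only [forestS, Finset.mem_singleton]
        constructor
        · rintro rfl; exact ⟨⟨trivial, by simp [ntrees]⟩, rfl⟩
        · rintro ⟨-, h⟩
          match X with
          | nil => rfl
          | node c r => simp [size] at h
    | n+1 =>
        rw [forestS]
        simp only [Finset.mem_union, Finset.mem_image, Finset.mem_biUnion, Finset.mem_attach]
        constructor
        · rintro (⟨c, hc, rfl⟩ | ⟨⟨i, hi⟩, -, c, hc, d, hd, rfl⟩)
          · obtain ⟨⟨hcU, hc2⟩, hcs⟩ := (ih n (by omega) c).mp hc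
            exact ⟨⟨by rw [UB_node]; exact ⟨hc2, hcU, trivial⟩, by simp [ntrees]⟩,
              by simp [size]; omega⟩
          · rw [Finset.mem_range] at hi
            obtain ⟨⟨hcU, hc2⟩, hcs⟩ := (ih i (by omega) c).mp hc
            obtain ⟨⟨hdU, hd2⟩, hds⟩ := (ih (n-1-i) (by omega) d).mp hd
            refine ⟨⟨?_, by simp [ntrees]⟩, by simp [size]; omega⟩
            rw [UB_node]
            exact ⟨hc2, hcU, by rw [UB_node]; exact ⟨hd2, hdU, trivial⟩⟩
        · rintro ⟨⟨hU, h2⟩, hsz⟩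
          match X with
          | nil => simp [size] at hsz
          | node c nil =>
              left
              refine ⟨c, ?_, rfl⟩
              rw [UB_node] at hU
              rw [ih n (by omega) c]
              simp [size] at hsz
              exact ⟨⟨hU.2.1, hU.1⟩, by omega⟩
          | node c (node d nil) =>
              right
              rw [UB_node] at hU
              obtain ⟨hc2, hcU, hd⟩ := hU
              rw [UB_node] at hd
              simp only [size] at hsz
              have hin : c.size < n := by omega
              refine ⟨⟨c.size, Finset.mem_range.mpr hin⟩, trivial, c, ?_, d, ?_, rfl⟩
              · rw [ih c.size (by omega) c]
                exact ⟨⟨hcU, hc2⟩, rfl⟩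
              · rw [ih (n-1-c.size) (by omega) d]
                refine ⟨⟨hd.2.1, hd.1⟩, by omega⟩
          | node c (node d (node e r)) =>
              exfalso
              simp only [ntrees] at h2
              omega

open Finset in
lemma card_forestS_succ (n : ℕ) : (forestS (n+1)).card
    = (forestS n).card + ∑ i ∈ range n, (forestS i).card * (forestS (n-1-i)).card := by
  rw [forestS]
  rw [Finset.card_union_of_disjoint]
  · congr 1
    · exact Finset.card_image_of_injective _ (fun a b h => by
        injection h)
    · rw [Finset.card_biUnion]
      · rw [← Finset.sum_attach (range n)
              (fun i => (forestS i).card * (forestS (n-1-i)).card)]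
        apply Finset.sum_congr rfl
        intro i _
        rw [Finset.card_biUnion]
        · rw [← Finset.sum_const_nat (m := (forestS (n-1-i.1)).card) (fun c _ => rfl)]
          apply Finset.sum_congr rfl
          intro c _
          exact Finset.card_image_of_injective _ (fun a b h => by injection h with h1 h2; injection h2)
        · intro c hc c' hc' hne
          rw [Function.onFun, Finset.disjoint_left]
          rintro x hx hx'
          simp only [Finset.mem_image] at hx hx'
          obtain ⟨d, -, rfl⟩ := hx
          obtain ⟨d', -, h⟩ := hx'
          injection h with h1 h2
          exact hne h1.symm
      · intro i _ j _ hne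
        rw [Function.onFun, Finset.disjoint_left]
        rintro x hx hx'
        simp only [Finset.mem_biUnion, Finset.mem_image] at hx hx'
        obtain ⟨c, hc, d, -, rfl⟩ := hx
        obtain ⟨c', hc', d', -, h⟩ := hx'
        injection h with h1 h2
        have e1 := ((mem_forestS i.1 c).mp hc).2
        have e2 := ((mem_forestS j.1 c').mp hc').2
        rw [h1] at e2
        refine hne (Subtype.ext ?_)
        omega
  · rw [Finset.disjoint_left]
    rintro x hx hx'
    simp only [Finset.mem_image, Finset.mem_biUnion] at hx hx'
    obtain ⟨c, -, rfl⟩ := hx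
    obtain ⟨i, -, c', -, d, -, h⟩ := hx'
    injection h with h1 h2
    exact PF.noConfusion h2

lemma card_forestS_eq_motzkin : ∀ n : ℕ, (forestS n).card = motzkin n := by
  intro n
  induction n using Nat.strong_induction_on with
  | _ n ih =>
    match n with
    | 0 => simp [forestS, motzkin_zero]
    | n+1 =>
        rw [card_forestS_succ, motzkin_rec, ih n (by omega)]
        congr 1
        apply Finset.sum_congr rfl
        intro i hi
        rw [Finset.mem_range] at hi
        rw [ih i (by omega), ih (n-1-i) (by omega)]


lemma cohort_ncard (n : ℕ) :
    Set.ncard {X : PF | X.size = n ∧ Sim X (nest n)} = motzkin n := by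
  have hset : {X : PF | X.size = n ∧ Sim X (nest n)} = ↑(forestS n) := by
    ext X
    rw [Finset.mem_coe, mem_forestS]
    exact sim_nest_iff n X
  rw [hset, Set.ncard_coe_finset, card_forestS_eq_motzkin]

lemma atom_ncard (n : ℕ) :
    Set.ncard {X : PF | X.IsAtom ∧ X.size = n + 1 ∧ Sim X (nest (n+1))} = motzkin n := by
  have hset : {X : PF | X.IsAtom ∧ X.size = n + 1 ∧ Sim X (nest (n+1))}
      = ↑((forestS n).image fun c => PF.node c PF.nil) := by
    ext X
    simp only [Set.mem_setOf_eq, Finset.coe_image, Set.mem_image, Finset.mem_coe]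
    constructor
    · rintro ⟨⟨c, rfl⟩, h1, h2⟩
      refine ⟨c, ?_, rfl⟩
      rw [mem_forestS]
      have hg : Good (node c nil) := h2.good_iff.mpr (good_nest (n+1))
      obtain ⟨hU, -⟩ := hg
      rw [UB_node] at hU
      simp only [size] at h1
      exact ⟨⟨hU.2.1, hU.1⟩, by omega⟩
    · rintro ⟨c, hc, rfl⟩
      rw [mem_forestS] at hc
      obtain ⟨⟨hcU, hc2⟩, hcs⟩ := hc
      have hg : Good (node c nil) :=
        ⟨by rw [UB_node]; exact ⟨hc2, hcU, trivial⟩, by simp [ntrees]⟩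
      have hsz : (node c nil : PF).size = n+1 := by simp only [size]; omega
      exact ⟨⟨c, rfl⟩, hsz, good_sim_nest (n+1) _ hsz hg⟩
  rw [hset, Set.ncard_coe_finset,
    Finset.card_image_of_injective _ (fun a b h => by injection h), card_forestS_eq_motzkin]

lemma atom_zero : {X : PF | X.IsAtom ∧ X.size = 0 ∧ Sim X (nest 0)} = ∅ := by
  ext X
  simp only [Set.mem_setOf_eq, Set.mem_empty_iff_false, iff_false]
  rintro ⟨⟨c, rfl⟩, h1, -⟩
  simp [size] at h1

lemma coeff_Mgf (n : ℕ) : PowerSeries.coeff n Mgf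
    = if n = 0 then 0 else (motzkin (n-1) : ℚ) := by
  rw [Mgf, PowerSeries.coeff_mk]
  cases n with
  | zero => simp [atom_zero]
  | succ m => simp [atom_ncard m]

lemma Gsum (m : ℕ) :
    (motzkin m : ℚ) = (if m + 1 = 1 then 1 else 0)
      + (if m = 0 then (0:ℚ) else (motzkin (m-1) : ℚ))
      + ∑ k ∈ Finset.range (m+1),
          (if k = 0 then (0:ℚ) else (motzkin (k-1) : ℚ))
            * (if m - k = 0 then (0:ℚ) else (motzkin (m-k-1) : ℚ)) := by
  cases m with
  | zero => simp [motzkin_zero]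
  | succ j =>
      have hsum : (∑ k ∈ Finset.range (j+2),
          (if k = 0 then (0:ℚ) else (motzkin (k-1) : ℚ))
            * (if j + 1 - k = 0 then (0:ℚ) else (motzkin (j+1-k-1) : ℚ)))
          = ∑ i ∈ Finset.range j, ((motzkin i : ℚ) * (motzkin (j-1-i) : ℚ)) := by
        rw [Finset.sum_range_succ' _ (j+1)]
        simp only [if_pos rfl, eq_self_iff_true, if_true, zero_mul, mul_zero, add_zero,
          Nat.succ_ne_zero, if_false, Nat.add_sub_cancel]
        rw [Finset.sum_range_succ]
        have hz : j + 1 - (j + 1) = 0 := by omega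
        rw [hz, if_pos rfl, mul_zero, add_zero]
        apply Finset.sum_congr rfl
        intro k hk
        rw [Finset.mem_range] at hk
        have h1 : j + 1 - (k+1) = j - k := by omega
        have h2 : j - k ≠ 0 := by omega
        have h3 : j - k - 1 = j - 1 - k := by omega
        rw [h1, if_neg h2, h3]
      rw [hsum]
      simp only [Nat.succ_ne_zero, if_false, Nat.add_sub_cancel]
      have := motzkin_rec j
      have hcast : (motzkin (j+1) : ℚ)
          = (motzkin j : ℚ) + ∑ i ∈ Finset.range j, ((motzkin i : ℚ) * (motzkin (j-1-i) : ℚ)) := by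
        rw [this]
        push_cast
        ring
      rw [hcast]
      split_ifs with h5
      · exact absurd h5 (by omega)
      · ring


/-- `M = t + tM + tM²`, so the number of atoms of size `n+1` in the main cohort is
the `n`-th Motzkin number, and consequently the number of arch systems in the
main cohort of size `n` is the `n`-th Motzkin number. -/
theorem main_cohort_motzkin :
    Mgf = PowerSeries.X + PowerSeries.X * Mgf + PowerSeries.X * Mgf ^ 2 ∧
    (∀ n : ℕ, Set.ncard {X : PF | X.IsAtom ∧ X.size = n + 1 ∧ Sim X (nest (n + 1))}
        = motzkin n) ∧
    (∀ n : ℕ, Set.ncard {X : PF | X.size = n ∧ Sim X (nest n)} = motzkin n) := by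
  refine ⟨?_, atom_ncard, cohort_ncard⟩
  ext n
  rw [map_add, map_add]
  cases n with
  | zero =>
      rw [coeff_Mgf]
      simp [PowerSeries.coeff_zero_eq_constantCoeff, map_mul]
  | succ m =>
      rw [coeff_Mgf, pow_two, PowerSeries.coeff_succ_X_mul, PowerSeries.coeff_succ_X_mul,
        PowerSeries.coeff_X, PowerSeries.coeff_mul,
        Finset.Nat.sum_antidiagonal_eq_sum_range_succ_mk]
      simp only [coeff_Mgf, Nat.succ_ne_zero, if_false, Nat.add_sub_cancel]
      exact Gsum m
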